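/- Let F be the distribution function of a Borel probability measure on R, and suppose F belongs to D(G_gamma) for some gamma < 0. Then the right endpoint x_F is finite. -/

import Mathlib

open MeasureTheory Filter Topology Set NNReal

/-- The cumulative distribution function of a Borel probability measure on `ℝ`:
`F(x) = μ((-∞, x])`. -/
noncomputable def distrib (μ : ProbabilityMeasure ℝ) (x : ℝ) : ℝ :=
  (μ (Set.Iic x) : ℝ≥0)

/-- The generalized extreme value distribution function `G_γ`, with
`G_γ(x) = exp(-(1+γx)^(-1/γ))` where `1 + γx > 0` (interpreted as
`G_0(x) = exp(-e^(-x))` when `γ = 0`). -/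
noncomputable def evCdf (γ : ℝ) (x : ℝ) : ℝ :=
  if γ = 0 then Real.exp (-Real.exp (-x))
  else if 0 < 1 + γ * x then Real.exp (-(1 + γ * x) ^ (-1 / γ))
  else if 0 < γ then 0 else 1

/-- `μ` belongs to the maximum domain of attraction `D(G_γ)`: there are `a n > 0` and `b n`
such that `(F (a n * x + b n)) ^ n → G_γ x` at every continuity point `x` of `G_γ`. -/
def MemDomAttr (γ : ℝ) (μ : ProbabilityMeasure ℝ) : Prop :=
  ∃ a b : ℕ → ℝ, (∀ n, 0 < a n) ∧
    ∀ x : ℝ, ContinuousAt (evCdf γ) x →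
      Tendsto (fun n : ℕ => distrib μ (a n * x + b n) ^ n) atTop (𝓝 (evCdf γ x))

/-- The right endpoint `x_F = sup {x : F x < 1}` of a distribution, as an extended real. -/
noncomputable def rightEndpoint (μ : ProbabilityMeasure ℝ) : EReal :=
  sSup ((fun x : ℝ => (x : EReal)) '' {x : ℝ | distrib μ x < 1})

lemma negInvPos {γ : ℝ} (hγ : γ < 0) : 0 < -1/γ :=
  div_pos_iff.mpr (Or.inr ⟨by norm_num, hγ⟩)

lemma sqrt_exp' (z : ℝ) : Real.sqrt (Real.exp z) = Real.exp (z/2) := by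
  rw [show Real.exp z = Real.exp (z/2) ^ 2 by rw [sq, ← Real.exp_add]; congr 1; ring]
  exact Real.sqrt_sq (Real.exp_pos _).le

lemma evCdf_eq_of_neg {γ : ℝ} (hγ : γ < 0) :
    evCdf γ = fun x => Real.exp (-(max (1 + γ * x) 0) ^ (-1 / γ)) := by
  funext x
  rw [evCdf, if_neg hγ.ne]
  by_cases h : 0 < 1 + γ * x
  · rw [if_pos h, max_eq_left h.le]
  · rw [if_neg h, if_neg (by linarith : ¬ 0 < γ), max_eq_right (not_lt.mp h),
      Real.zero_rpow (negInvPos hγ).ne', neg_zero, Real.exp_zero]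

lemma evCdf_continuous {γ : ℝ} (hγ : γ < 0) : Continuous (evCdf γ) := by
  rw [evCdf_eq_of_neg hγ]
  have h1 : Continuous fun x : ℝ => max (1 + γ * x) 0 :=
    (continuous_const.add (continuous_const.mul continuous_id)).max continuous_const
  exact (((h1.rpow_const (fun x => Or.inr (negInvPos hγ).le)).neg).rexp)

/-- If `F ∈ D(G_γ)` for some `γ < 0`, then the right endpoint `x_F` is finite. -/
theorem weibull_domain_necessary (μ : ProbabilityMeasure ℝ) (γ : ℝ) (hγ : γ < 0)
    (h : MemDomAttr γ μ) :
    rightEndpoint μ < ⊤ := by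
  obtain ⟨a, b, ha, hconv⟩ := h
  have hγ0 : γ ≠ 0 := hγ.ne
  set w : ℝ := -1/γ with hwdef
  have hw : 0 < w := negInvPos hγ
  set F : ℝ → ℝ := distrib μ with hFdef
  have hF0 : ∀ x, 0 ≤ F x := fun x => NNReal.coe_nonneg _
  have hF1 : ∀ x, F x ≤ 1 := fun x => by
    show ((μ (Set.Iic x) : ℝ≥0) : ℝ) ≤ 1
    exact_mod_cast μ.apply_le_one (Set.Iic x)
  have hFmono : Monotone F := fun x y hxy =>
    NNReal.coe_le_coe.mpr (μ.apply_mono (Set.Iic_subset_Iic.mpr hxy))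
  have H : ∀ x : ℝ, Tendsto (fun n : ℕ => F (a n * x + b n) ^ n) atTop (𝓝 (evCdf γ x)) :=
    fun x => hconv x (evCdf_continuous hγ).continuousAt
  -- values of G on the grid
  have Gval : ∀ s : ℝ, s ≤ 1 → evCdf γ (s * w) = Real.exp (-(1 - s) ^ w) := by
    intro s hs
    have h1 : 1 + γ * (s * w) = 1 - s := by rw [hwdef]; field_simp; ring
    rw [evCdf_eq_of_neg hγ]
    simp only
    rw [h1, ← hwdef, max_eq_left (by linarith)]
  have htwo : Tendsto (fun n : ℕ => 2*n) atTop atTop := by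
    refine tendsto_atTop_mono (fun n => ?_) tendsto_id
    show n ≤ 2*n
    omega
  -- key comparison lemmas between scales n and 2n
  have key : ∀ s t : ℝ, s ≤ 1 → t ≤ 1 → (1-t)^w / 2 < (1-s)^w →
      ∀ᶠ n in atTop, a n * (s*w) + b n < a (2*n) * (t*w) + b (2*n) := by
    intro s t hs ht hst
    have T1 := H (s*w)
    have T2 := (H (t*w)).comp htwo
    have T3 : Tendsto (fun n : ℕ => F (a (2*n) * (t*w) + b (2*n)) ^ n) atTop
        (𝓝 (Real.sqrt (evCdf γ (t*w)))) := by
      refine T2.sqrt.congr (fun n => ?_)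
      show Real.sqrt (F (a (2*n) * (t*w) + b (2*n)) ^ (2*n)) = _
      rw [show 2*n = n*2 by ring, pow_mul, Real.sqrt_sq (pow_nonneg (hF0 _) _)]
    have hlt : evCdf γ (s*w) < Real.sqrt (evCdf γ (t*w)) := by
      rw [Gval s hs, Gval t ht, sqrt_exp']
      exact Real.exp_lt_exp.mpr (by linarith)
    filter_upwards [T1.eventually_lt T3 hlt] with n hn
    by_contra hle
    push_neg at hle
    exact absurd hn (not_lt.mpr (pow_le_pow_left₀ (hF0 _) (hFmono hle) n))
  have key' : ∀ s t : ℝ, s ≤ 1 → t ≤ 1 → (1-s)^w < (1-t)^w / 2 →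
      ∀ᶠ n in atTop, a (2*n) * (t*w) + b (2*n) < a n * (s*w) + b n := by
    intro s t hs ht hst
    have T1 := H (s*w)
    have T2 := (H (t*w)).comp htwo
    have T3 : Tendsto (fun n : ℕ => F (a (2*n) * (t*w) + b (2*n)) ^ n) atTop
        (𝓝 (Real.sqrt (evCdf γ (t*w)))) := by
      refine T2.sqrt.congr (fun n => ?_)
      show Real.sqrt (F (a (2*n) * (t*w) + b (2*n)) ^ (2*n)) = _
      rw [show 2*n = n*2 by ring, pow_mul, Real.sqrt_sq (pow_nonneg (hF0 _) _)]
    have hlt : Real.sqrt (evCdf γ (t*w)) < evCdf γ (s*w) := by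
      rw [Gval s hs, Gval t ht, sqrt_exp']
      exact Real.exp_lt_exp.mpr (by linarith)
    filter_upwards [T3.eventually_lt T1 hlt] with n hn
    by_contra hle
    push_neg at hle
    exact absurd hn (not_lt.mpr (pow_le_pow_left₀ (hF0 _) (hFmono hle) n))
  -- the constants
  set ρ : ℝ := (2:ℝ) ^ γ with hρdef
  have hρ0 : 0 < ρ := Real.rpow_pos_of_pos two_pos γ
  have hρ1 : ρ < 1 := Real.rpow_lt_one_of_one_lt_of_neg one_lt_two hγ
  have hρw : ρ ^ w = 1/2 := by
    rw [hρdef, ← Real.rpow_mul (by norm_num : (0:ℝ) ≤ 2),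
      show γ * w = -1 by rw [hwdef]; field_simp, Real.rpow_neg_one]
    norm_num
  set ε : ℝ := min (ρ/4) ((1-ρ)/8) with hεdef
  have hε0 : 0 < ε := lt_min (by positivity) (by linarith)
  have hε1 : ε ≤ ρ/4 := min_le_left _ _
  have hε2 : ε ≤ (1-ρ)/8 := min_le_right _ _
  have hhalf : (ρ/2)^w = (1/2:ℝ)^w / 2 := by
    rw [show ρ/2 = ρ * (1/2) by ring, Real.mul_rpow hρ0.le (by norm_num), hρw]; ring
  -- the four eventual comparisons
  have k1 : ∀ᶠ n in atTop, a (2*n) * ((0:ℝ)*w) + b (2*n) < a n * ((1-ρ+ε)*w) + b n := by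
    refine key' (1-ρ+ε) 0 (by linarith) (by norm_num) ?_
    rw [show (1:ℝ)-(1-ρ+ε) = ρ-ε by ring, show (1:ℝ)-0 = 1 by ring, Real.one_rpow]
    have := Real.rpow_lt_rpow (by linarith : (0:ℝ) ≤ ρ-ε) (by linarith : ρ-ε < ρ) hw
    linarith [hρw ▸ this]
  have k2 : ∀ᶠ n in atTop, a n * ((1-ρ-ε)*w) + b n < a (2*n) * ((0:ℝ)*w) + b (2*n) := by
    refine key (1-ρ-ε) 0 (by linarith) (by norm_num) ?_
    rw [show (1:ℝ)-(1-ρ-ε) = ρ+ε by ring, show (1:ℝ)-0 = 1 by ring, Real.one_rpow]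
    have := Real.rpow_lt_rpow hρ0.le (by linarith : ρ < ρ+ε) hw
    linarith [hρw ▸ this]
  have k3 : ∀ᶠ n in atTop, a (2*n) * ((1/2:ℝ)*w) + b (2*n) < a n * ((1-ρ/2+ε)*w) + b n := by
    refine key' (1-ρ/2+ε) (1/2) (by linarith) (by norm_num) ?_
    rw [show (1:ℝ)-(1-ρ/2+ε) = ρ/2-ε by ring, show (1:ℝ)-1/2 = 1/2 by ring]
    have := Real.rpow_lt_rpow (by linarith : (0:ℝ) ≤ ρ/2-ε) (by linarith : ρ/2-ε < ρ/2) hw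
    linarith [hhalf ▸ this]
  have k4 : ∀ᶠ n in atTop, a n * ((1-ρ/2-ε)*w) + b n < a (2*n) * ((1/2:ℝ)*w) + b (2*n) := by
    refine key (1-ρ/2-ε) (1/2) (by linarith) (by norm_num) ?_
    rw [show (1:ℝ)-(1-ρ/2-ε) = ρ/2+ε by ring, show (1:ℝ)-1/2 = 1/2 by ring]
    have := Real.rpow_lt_rpow (by positivity : (0:ℝ) ≤ ρ/2) (by linarith : ρ/2 < ρ/2+ε) hw
    linarith [hhalf ▸ this]
  obtain ⟨N, hN⟩ := eventually_atTop.mp ((k1.and k2).and (k3.and k4))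
  -- A and C
  set A : ℕ → ℝ := fun n => a n * w with hAdef
  set C : ℕ → ℝ := fun n => a n * w + b n with hCdef
  have hApos : ∀ m, 0 < A m := fun m => mul_pos (ha m) hw
  have hq : ∀ (m : ℕ) (s : ℝ), a m * (s*w) + b m = s * A m + b m := by
    intro m s; rw [hAdef]; ring
  have step : ∀ n, N ≤ n → A (2*n) ≤ (ρ + 4*ε) * A n ∧ C (2*n) ≤ C n + 5*ε*A n := by
    intro n hn
    obtain ⟨⟨g1, g2⟩, g3, g4⟩ := hN n hn
    rw [hq, hq] at g1 g2 g3 g4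
    have hCe : ∀ m, C m = A m + b m := fun m => by rw [hCdef, hAdef]
    constructor
    · nlinarith [g2, g3]
    · rw [hCe, hCe]
      nlinarith [g1, g2, g3]
  have hr1 : ρ + 4*ε < 1 := by linarith
  set κ : ℝ := 5*ε/(1-(ρ+4*ε)) with hκdef
  have hκ0 : 0 ≤ κ := div_nonneg (by linarith) (by linarith)
  set N' : ℕ := max N 1 with hN'def
  have hN'1 : 1 ≤ N' := le_max_right N 1
  have ind : ∀ k : ℕ, C (2^k * N') + κ * A (2^k * N') ≤ C N' + κ * A N' := by
    intro k
    induction k with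
    | zero => simp
    | succ k ih =>
      have hn : N ≤ 2^k * N' :=
        le_trans (le_max_left N 1) (Nat.le_mul_of_pos_left _ (Nat.two_pow_pos k))
      obtain ⟨sA, sC⟩ := step _ hn
      have h2 : 2^(k+1) * N' = 2*(2^k * N') := by ring
      rw [h2]
      have hmul : κ * A (2*(2^k*N')) ≤ κ * ((ρ+4*ε) * A (2^k*N')) :=
        mul_le_mul_of_nonneg_left sA hκ0
      have hkey : 5*ε*A (2^k*N') + κ*((ρ+4*ε) * A (2^k*N')) = κ * A (2^k*N') := by
        have hne : 1 - (ρ+4*ε) ≠ 0 := by linarith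
        have hk : κ * (1 - (ρ+4*ε)) = 5*ε := div_mul_cancel₀ _ hne
        linear_combination (-A (2^k*N')) * hk
      linarith [sC, hmul, ih, hkey]
  have hM : ∀ k : ℕ, C (2^k * N') ≤ C N' + κ * A N' := fun k => by
    have := mul_nonneg hκ0 (hApos (2^k * N')).le
    linarith [ind k]
  set M : ℝ := C N' + κ * A N' with hMdef
  -- conclude F M = 1
  have htop : Tendsto (fun k : ℕ => 2^k * N') atTop atTop := by
    refine tendsto_atTop_mono (fun k => ?_) tendsto_id
    show k ≤ 2^k * N'
    calc (k : ℕ) ≤ 2^k := Nat.lt_two_pow_self.le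
      _ ≤ 2^k * N' := Nat.le_mul_of_pos_right _ (by omega)
  have hGw : evCdf γ ((1:ℝ) * w) = 1 := by
    rw [Gval 1 le_rfl]
    norm_num [Real.zero_rpow hw.ne']
  have Htend : Tendsto (fun k : ℕ => F (a (2^k*N') * ((1:ℝ)*w) + b (2^k*N')) ^ (2^k*N'))
      atTop (𝓝 1) := by
    have := (H ((1:ℝ)*w)).comp htop
    rwa [hGw] at this
  have hFM_ge : ∀ k : ℕ, F (a (2^k*N') * ((1:ℝ)*w) + b (2^k*N')) ^ (2^k*N') ≤ F M := by
    intro k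
    have harg : a (2^k*N') * ((1:ℝ)*w) + b (2^k*N') = C (2^k*N') := by rw [hCdef]; ring
    have hk1 : 1 ≤ 2^k*N' := le_trans hN'1 (Nat.le_mul_of_pos_left _ (Nat.two_pow_pos k))
    calc F (a (2^k*N') * ((1:ℝ)*w) + b (2^k*N')) ^ (2^k*N')
        ≤ F (a (2^k*N') * ((1:ℝ)*w) + b (2^k*N')) ^ 1 :=
          pow_le_pow_of_le_one (hF0 _) (hF1 _) hk1
      _ = F (C (2^k*N')) := by rw [pow_one, harg]
      _ ≤ F M := hFmono (hM k)
  have h1M : 1 ≤ F M := le_of_tendsto Htend (Eventually.of_forall hFM_ge)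
  -- finish
  rw [rightEndpoint]
  refine lt_of_le_of_lt (sSup_le ?_) (EReal.coe_lt_top M)
  rintro y ⟨x, hx, rfl⟩
  rw [EReal.coe_le_coe_iff]
  by_contra hxM
  push_neg at hxM
  have hx' : F x < 1 := hx
  linarith [hFmono hxM.le, h1M, hx']
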